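/- Let $\psi(z,\epsilon) = \varepsilon_0(|z|^8 + c\,\mathrm{Re}(|z|^2 z^6)) + |z|^{10} + \epsilon|z|^2$ for $z \in \mathbb{C}$, where $\varepsilon_0 > 0$ and $2 < c < 16/7$. Then there exists $\tilde\epsilon > 0$ such that for every $0 < \epsilon \le \tilde\epsilon$, there is a point $\mu_0 \in \mathbb{C}$ with $\psi(\mu_0,\epsilon) < 0$. In particular one may take $\mu_0 = \lambda' e^{i\pi/6}$ for suitable small $\lambda' > 0$. -/

import Mathlib

noncomputable section

/-- `ψ(z,ε) = ε₀(|z|⁸ + c Re(|z|² z⁶)) + |z|¹⁰ + ε |z|²` on `ℂ`. -/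
def psi (ε₀ c : ℝ) (z : ℂ) (e : ℝ) : ℝ :=
  ε₀ * (‖z‖ ^ 8 + c * (‖z‖ ^ 2 * (z ^ 6).re))
    + ‖z‖ ^ 10 + e * ‖z‖ ^ 2

lemma psi_at_angle (ε₀ c lam e : ℝ) (hlam : 0 ≤ lam) :
    psi ε₀ c ((lam : ℂ) * Complex.exp (Real.pi * Complex.I / 6)) e
      = ε₀ * (lam ^ 8 - c * lam ^ 8) + lam ^ 10 + e * lam ^ 2 := by
  have habs : ‖(lam : ℂ) * Complex.exp (Real.pi * Complex.I / 6)‖ = lam := by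
    rw [norm_mul, Complex.norm_exp]
    simp [hlam, abs_of_nonneg]
  have hz6 : (((lam : ℂ) * Complex.exp (Real.pi * Complex.I / 6)) ^ 6).re = -lam ^ 6 := by
    have : ((lam : ℂ) * Complex.exp (Real.pi * Complex.I / 6)) ^ 6
        = (lam : ℂ) ^ 6 * Complex.exp (Real.pi * Complex.I) := by
      rw [mul_pow, ← Complex.exp_nat_mul]
      ring_nf
    rw [this, Complex.exp_pi_mul_I]
    simp [← Complex.ofReal_pow]
  rw [psi, habs, hz6]
  ring

theorem stmt9 (ε₀ c : ℝ) (hε₀ : 0 < ε₀) (hc1 : 2 < c) (hc2 : c < 16 / 7) :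
    ∃ te : ℝ, 0 < te ∧ ∃ lam : ℝ, 0 < lam ∧ ∀ e : ℝ, 0 < e → e ≤ te →
      psi ε₀ c ((lam : ℂ) * Complex.exp (Real.pi * Complex.I / 6)) e < 0 := by
  set lam := Real.sqrt (ε₀ / 2) with hlamdef
  have hlam : 0 < lam := Real.sqrt_pos.mpr (by linarith)
  have hsq : lam ^ 2 = ε₀ / 2 := Real.sq_sqrt (by linarith)
  refine ⟨ε₀ * lam ^ 6 / 4, by positivity, lam, hlam, fun e he1 he2 => ?_⟩
  rw [psi_at_angle ε₀ c lam e hlam.le]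
  have h10 : lam ^ 10 = lam ^ 8 * (ε₀ / 2) := by rw [← hsq]; ring
  have he2' : e * lam ^ 2 ≤ ε₀ * lam ^ 8 / 4 := by
    calc e * lam ^ 2 ≤ (ε₀ * lam ^ 6 / 4) * lam ^ 2 := by
          apply mul_le_mul_of_nonneg_right he2 (by positivity)
      _ = ε₀ * lam ^ 8 / 4 := by ring
  have hkey : ε₀ * (lam ^ 8 - c * lam ^ 8) ≤ -ε₀ * lam ^ 8 := by
    have h8 : (0:ℝ) < lam ^ 8 := by positivity
    nlinarith [mul_nonneg (mul_nonneg (by linarith : (0:ℝ) ≤ c - 2) hε₀.le) h8.le]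
  nlinarith [mul_pos hε₀ (pow_pos hlam 8)]

end
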